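/- For any permutation π in the symmetric group S_p and the full cycle γ = (1 2 ... p) in S_p, the number of cycles satisfies |π| + |πγ⁻¹| ≤ p + 1, where |σ| denotes the number of cycles of σ. -/

import Mathlib

open Equiv Equiv.Perm

variable {α : Type*}

/-- The setoid of the same-cycle relation of a permutation. -/
def scSetoid (σ : Perm α) : Setoid α :=
  ⟨σ.SameCycle, ⟨SameCycle.refl σ, SameCycle.symm, SameCycle.trans⟩⟩

/-- The setoid obtained by merging the classes of `a` and `b`. -/
def mergeSetoid (s : Setoid α) (a b : α) : Setoid α where
  r u v := s.r u v ∨ (s.r u a ∧ s.r b v) ∨ (s.r u b ∧ s.r a v)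
  iseqv := by
    constructor
    · intro u; exact Or.inl (s.refl u)
    · rintro u v (h | ⟨h1, h2⟩ | ⟨h1, h2⟩)
      exacts [Or.inl (s.symm h), Or.inr (Or.inr ⟨s.symm h2, s.symm h1⟩),
        Or.inr (Or.inl ⟨s.symm h2, s.symm h1⟩)]
    · rintro u v w (h | ⟨h1, h2⟩ | ⟨h1, h2⟩) (g | ⟨g1, g2⟩ | ⟨g1, g2⟩)
      · exact Or.inl (s.trans h g)
      · exact Or.inr (Or.inl ⟨s.trans h g1, g2⟩)
      · exact Or.inr (Or.inr ⟨s.trans h g1, g2⟩)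
      · exact Or.inr (Or.inl ⟨h1, s.trans h2 g⟩)
      · exact Or.inl (s.trans (s.trans h1 (s.symm (s.trans h2 g1))) g2)
      · exact Or.inl (s.trans h1 g2)
      · exact Or.inr (Or.inr ⟨h1, s.trans h2 g⟩)
      · exact Or.inl (s.trans h1 g2)
      · exact Or.inl (s.trans (s.trans h1 (s.symm (s.trans h2 g1))) g2)

/-- number of classes -/
noncomputable def Nc (s : Setoid α) : ℕ := Nat.card (Quotient s)

lemma le_refl_merge (s : Setoid α) (a b : α) : ∀ u v, s.r u v → (mergeSetoid s a b).r u v :=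
  fun _ _ h => Or.inl h

lemma Nc_le_of_le [Finite α] {s t : Setoid α} (h : ∀ u v, s.r u v → t.r u v) :
    Nc t ≤ Nc s := by
  apply Nat.card_le_card_of_surjective (Quotient.map' id h)
  intro c
  obtain ⟨x, rfl⟩ := Quotient.exists_rep c
  exact ⟨Quotient.mk'' x, rfl⟩

lemma Nc_merge_add_one [Finite α] (s : Setoid α) {a b : α} (hab : ¬ s.r a b) :
    Nc (mergeSetoid s a b) + 1 = Nc s := by
  classical
  set M := mergeSetoid s a b
  let q : Quotient s → Quotient M := Quotient.map' id (le_refl_merge s a b)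
  have hq : ∀ x y : α, q (Quotient.mk _ x) = Quotient.mk _ y ↔ M.r x y := by
    intro x y
    constructor
    · intro h; exact Quotient.exact' h
    · intro h; exact Quotient.sound' h
  have hab' : (Quotient.mk s a) ≠ (Quotient.mk s b) := fun h => hab (Quotient.exact' h)
  -- q restricted to the complement of ⟦a⟧ is a bijection onto Quotient M
  have key : ∀ c : Quotient M, ∃! d : {d : Quotient s // d ≠ Quotient.mk s a}, q d.1 = c := by
    intro c
    obtain ⟨x, rfl⟩ := Quotient.exists_rep c
    have hx : ∃ y : α, Quotient.mk s y ≠ Quotient.mk s a ∧ M.r y x := by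
      by_cases h : s.r x a
      · exact ⟨b, fun hh => hab' hh.symm, Or.inr (Or.inr ⟨s.refl b, s.symm h⟩)⟩
      · exact ⟨x, fun hh => h (Quotient.exact' hh), Setoid.refl' M x⟩
    obtain ⟨y, hy1, hy2⟩ := hx
    refine ⟨⟨Quotient.mk s y, hy1⟩, Quotient.sound' hy2, ?_⟩
    rintro ⟨d, hd⟩ hqd
    obtain ⟨z, rfl⟩ := Quotient.exists_rep d
    simp only [Subtype.mk.injEq]
    -- M.r z x and M.r y x, with z,y not in class of a
    have hz : M.r z x := Quotient.exact' hqd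
    have hzy : M.r z y := M.trans hz (M.symm hy2)
    rcases hzy with h | ⟨h1, _⟩ | ⟨h1, h2⟩
    · exact Quotient.sound' h
    · exact absurd (Quotient.sound' h1 : Quotient.mk s z = Quotient.mk s a) hd
    · exact absurd (Quotient.sound' (s.symm h2) : Quotient.mk s y = Quotient.mk s a) hy1
  let e : {d : Quotient s // d ≠ Quotient.mk s a} ≃ Quotient M :=
    Equiv.ofBijective (fun d => q d.1)
      ⟨fun d1 d2 h => by
        obtain ⟨d, hd, hu⟩ := key (q d2.1)
        exact (hu d1 h).trans (hu d2 rfl).symm,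
       fun c => ⟨(key c).exists.choose, (key c).exists.choose_spec⟩⟩
  have := Nat.card_congr e
  rw [Nc, Nc, ← this]
  have := Nat.card_congr (Equiv.optionSubtypeNe (Quotient.mk s a))
  rw [← this, Finite.card_option]

lemma merge_eq_of_rel (s : Setoid α) {a b : α} (hab : s.r a b) :
    ∀ u v, (mergeSetoid s a b).r u v ↔ s.r u v := by
  intro u v
  constructor
  · rintro (h | ⟨h1, h2⟩ | ⟨h1, h2⟩)
    · exact h
    · exact s.trans (s.trans h1 hab) h2
    · exact s.trans (s.trans h1 (s.symm hab)) h2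
  · exact Or.inl

lemma Nc_le_merge_add_one [Finite α] (s : Setoid α) (a b : α) :
    Nc s ≤ Nc (mergeSetoid s a b) + 1 := by
  by_cases hab : s.r a b
  · have : mergeSetoid s a b = s := Setoid.ext fun u v => merge_eq_of_rel s hab u v
    rw [this]; omega
  · rw [Nc_merge_add_one s hab]
section Swap
variable [DecidableEq α]

lemma merge_rel_apply_swap_mul (σ : Perm α) (a b x : α) :
    (mergeSetoid (scSetoid σ) a b).r x ((Equiv.swap a b * σ) x) := by
  have hx : σ.SameCycle x (σ x) := ⟨1, by simp⟩
  rcases eq_or_ne (σ x) a with h | h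
  · have : (Equiv.swap a b * σ) x = b := by simp [Perm.mul_apply, h]
    rw [this]
    exact Or.inr (Or.inl ⟨h ▸ hx, (scSetoid σ).refl b⟩)
  · rcases eq_or_ne (σ x) b with h' | h'
    · have : (Equiv.swap a b * σ) x = a := by simp [Perm.mul_apply, h']
      rw [this]
      exact Or.inr (Or.inr ⟨h' ▸ hx, (scSetoid σ).refl a⟩)
    · have : (Equiv.swap a b * σ) x = σ x := by
        simp [Perm.mul_apply, Equiv.swap_apply_of_ne_of_ne h h']
      rw [this]
      exact Or.inl hx

lemma sameCycle_swap_mul_le_merge (σ : Perm α) (a b : α) {x y : α}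
    (h : (Equiv.swap a b * σ).SameCycle x y) :
    (mergeSetoid (scSetoid σ) a b).r x y := by
  set τ := Equiv.swap a b * σ with hτ
  set M := mergeSetoid (scSetoid σ) a b with hM
  obtain ⟨k, hk⟩ := h
  have aux : ∀ (k : ℤ) (x : α), M.r x ((τ ^ k) x) := by
    intro k
    induction k using Int.induction_on with
    | zero => intro x; simpa using M.refl x
    | succ n ih =>
        intro x
        have h1 : (τ ^ ((n : ℤ) + 1)) x = (τ ^ (n : ℤ)) (τ x) := by
          rw [zpow_add_one]; rfl
        rw [h1]
        exact M.trans (merge_rel_apply_swap_mul σ a b x) (ih (τ x))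
    | pred n ih =>
        intro x
        have h1 : (τ ^ (-(n : ℤ) - 1)) x = (τ ^ (-(n : ℤ))) (τ⁻¹ x) := by
          rw [zpow_sub_one]; rfl
        rw [h1]
        have h2 : M.r x (τ⁻¹ x) := by
          have := merge_rel_apply_swap_mul σ a b (τ⁻¹ x)
          rw [show τ (τ⁻¹ x) = x from Equiv.apply_symm_apply τ x] at this
          exact M.symm this
        exact M.trans h2 (ih (τ⁻¹ x))
  rw [← hk]
  exact aux k x

lemma swap_mul_swap_mul (σ : Perm α) (a b : α) :
    Equiv.swap a b * (Equiv.swap a b * σ) = σ := by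
  rw [← mul_assoc, Equiv.swap_mul_self, one_mul]

/-- F2: multiplying by a swap decreases the number of cycles by at most one. -/
lemma Nc_le_Nc_swap_mul_add_one [Finite α] (σ : Perm α) (a b : α) :
    Nc (scSetoid σ) ≤ Nc (scSetoid (Equiv.swap a b * σ)) + 1 := by
  set τ := Equiv.swap a b * σ
  have h1 : ∀ u v, (scSetoid τ).r u v → (mergeSetoid (scSetoid σ) a b).r u v :=
    fun u v h => sameCycle_swap_mul_le_merge σ a b h
  have h2 : Nc (mergeSetoid (scSetoid σ) a b) ≤ Nc (scSetoid τ) := Nc_le_of_le h1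
  calc Nc (scSetoid σ) ≤ Nc (mergeSetoid (scSetoid σ) a b) + 1 := Nc_le_merge_add_one _ a b
    _ ≤ Nc (scSetoid τ) + 1 := by omega

/-- F1: multiplying by `swap x (σ x)` increases the number of cycles by exactly one. -/
lemma Nc_swap_mul_eq [Finite α] (σ : Perm α) {x : α} (hx : σ x ≠ x) :
    Nc (scSetoid (Equiv.swap x (σ x) * σ)) = Nc (scSetoid σ) + 1 := by
  set τ := Equiv.swap x (σ x) * σ with hτ
  have hστ : σ = Equiv.swap x (σ x) * τ := (swap_mul_swap_mul σ x (σ x)).symm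
  have hsc : (scSetoid σ).r x (σ x) := ⟨1, by simp⟩
  -- sτ ≤ sσ
  have hτσ : ∀ u v, (scSetoid τ).r u v → (scSetoid σ).r u v := by
    intro u v h
    have := sameCycle_swap_mul_le_merge σ x (σ x) (x := u) (y := v) h
    exact (merge_eq_of_rel (scSetoid σ) hsc u v).mp this
  -- sσ ≤ merge sτ
  have hσm : ∀ u v, (scSetoid σ).r u v → (mergeSetoid (scSetoid τ) x (σ x)).r u v := by
    intro u v h
    exact sameCycle_swap_mul_le_merge τ x (σ x) (hστ ▸ h)
  -- merge sτ ≤ sσ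
  have hmσ : ∀ u v, (mergeSetoid (scSetoid τ) x (σ x)).r u v → (scSetoid σ).r u v := by
    rintro u v (h | ⟨h1, h2⟩ | ⟨h1, h2⟩)
    · exact hτσ u v h
    · exact (scSetoid σ).trans ((scSetoid σ).trans (hτσ _ _ h1) hsc) (hτσ _ _ h2)
    · exact (scSetoid σ).trans ((scSetoid σ).trans (hτσ _ _ h1) ((scSetoid σ).symm hsc))
        (hτσ _ _ h2)
  have hmerge : mergeSetoid (scSetoid τ) x (σ x) = scSetoid σ :=
    Setoid.ext fun u v => ⟨hmσ u v, hσm u v⟩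
  -- x is a fixed point of τ, so x and σ x are not in the same τ-cycle
  have hτx : τ x = x := by simp [hτ, Perm.mul_apply]
  have hnot : ¬ (scSetoid τ).r x (σ x) := by
    rintro ⟨k, hk⟩
    exact hx (by rw [← hk, Equiv.Perm.zpow_apply_eq_self_of_apply_eq_self hτx k])
  have := Nc_merge_add_one (scSetoid τ) hnot
  rw [hmerge] at this
  omega

end Swap
/-- The number of cycles of a permutation, counting fixed points as cycles. -/
def cycleCount {p : ℕ} (σ : Equiv.Perm (Fin p)) : ℕ :=
  σ.cycleType.card + (Finset.univ.filter fun x => σ x = x).card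

lemma sameCycle_apply_ne {σ : Perm α} {x y : α} (h : σ.SameCycle x y) (hx : σ x ≠ x) :
    σ y ≠ y := fun hy => hx (h.apply_eq_self_iff.2 hy)

lemma cycleCount_eq_Nc {p : ℕ} (σ : Perm (Fin p)) : cycleCount σ = Nc (scSetoid σ) := by
  classical
  -- bijection from the quotient to cycle factors ⊕ fixed points
  let g : Fin p → {c // c ∈ σ.cycleFactorsFinset} ⊕ {x : Fin p // σ x = x} := fun x =>
    if h : σ x = x then Sum.inr ⟨x, h⟩
    else Sum.inl ⟨σ.cycleOf x, Equiv.Perm.cycleOf_mem_cycleFactorsFinset_iff.2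
      (Equiv.Perm.mem_support.2 h)⟩
  have hg : ∀ x y : Fin p, σ.SameCycle x y → g x = g y := by
    intro x y h
    by_cases hx : σ x = x
    · have : y = x := by
        obtain ⟨k, rfl⟩ := h
        exact Equiv.Perm.zpow_apply_eq_self_of_apply_eq_self hx k
      rw [this]
    · have hy : ¬ σ y = y := sameCycle_apply_ne h hx
      simp only [g, dif_neg hx, dif_neg hy, Sum.inl.injEq, Subtype.mk.injEq]
      exact h.cycleOf_eq
  let f : Quotient (scSetoid σ) → {c // c ∈ σ.cycleFactorsFinset} ⊕ {x : Fin p // σ x = x} :=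
    Quotient.lift g hg
  have hinj : Function.Injective f := by
    rintro ⟨x⟩ ⟨y⟩ h
    change g x = g y at h
    apply Quotient.sound
    show σ.SameCycle x y
    by_cases hx : σ x = x <;> by_cases hy : σ y = y
    · simp only [g, dif_pos hx, dif_pos hy, Sum.inr.injEq, Subtype.mk.injEq] at h
      exact h ▸ Equiv.Perm.SameCycle.refl σ x
    · simp only [g, dif_pos hx, dif_neg hy] at h; exact absurd h (by simp)
    · simp only [g, dif_neg hx, dif_pos hy] at h; exact absurd h (by simp)
    · simp only [g, dif_neg hx, dif_neg hy, Sum.inl.injEq, Subtype.mk.injEq] at h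
      have : y ∈ (σ.cycleOf x).support := by
        rw [h]
        exact Equiv.Perm.mem_support_cycleOf_iff.2
          ⟨Equiv.Perm.SameCycle.refl σ y, Equiv.Perm.mem_support.2 hy⟩
      exact (Equiv.Perm.mem_support_cycleOf_iff.1 this).1
  have hsurj : Function.Surjective f := by
    rintro (⟨c, hc⟩ | ⟨x, hx⟩)
    · have hc1 : c.IsCycle := (Equiv.Perm.mem_cycleFactorsFinset_iff.1 hc).1
      obtain ⟨x, hx⟩ := hc1.nonempty_support
      have hcx : c = σ.cycleOf x := Equiv.Perm.cycle_is_cycleOf hx hc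
      have hσx : σ x ≠ x := by
        have := (Equiv.Perm.mem_cycleFactorsFinset_iff.1 hc).2 x hx
        intro h
        exact (Equiv.Perm.mem_support.1 hx) (this.trans h)
      refine ⟨Quotient.mk _ x, ?_⟩
      show g x = _
      simp only [g, dif_neg hσx, Sum.inl.injEq, Subtype.mk.injEq]
      exact hcx.symm
    · exact ⟨Quotient.mk _ x, by show g x = _; simp [g, dif_pos hx]⟩
  have hcard := Nat.card_eq_of_bijective f ⟨hinj, hsurj⟩
  rw [Nc, hcard, Nat.card_sum, Nat.card_eq_fintype_card, Nat.card_eq_fintype_card,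
    Fintype.card_coe, Fintype.card_subtype]
  rw [cycleCount, Equiv.Perm.cycleType_def, Multiset.card_map]
  rfl
lemma Nc_one {p : ℕ} : Nc (scSetoid (1 : Perm (Fin p))) = p := by
  have hb : Function.Bijective (Quotient.mk (scSetoid (1 : Perm (Fin p)))) := by
    constructor
    · intro x y h
      exact Equiv.Perm.sameCycle_one.1 (Quotient.exact h)
    · intro c; exact Quotient.exists_rep c
  rw [Nc, ← Nat.card_eq_of_bijective _ hb, Nat.card_eq_fintype_card, Fintype.card_fin]

lemma exists_swap_decomp {p : ℕ} (σ : Perm (Fin p)) :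
    ∃ l : List (Perm (Fin p)), (∀ g ∈ l, Equiv.Perm.IsSwap g) ∧ l.prod = σ ∧
      Nc (scSetoid σ) + l.length = p := by
  generalize hn : σ.support.card = n
  induction n using Nat.strong_induction_on generalizing σ with
  | _ n ih =>
  by_cases h1 : σ = 1
  · subst h1
    exact ⟨[], by simp, by simp, by simp [Nc_one]⟩
  · obtain ⟨x, hx⟩ : ∃ x, σ x ≠ x := by
      by_contra h
      push_neg at h
      exact h1 (Equiv.ext fun x => h x)
    set τ := Equiv.swap x (σ x) * σ with hτ
    have hlt : τ.support.card < n := hn ▸ Equiv.Perm.card_support_swap_mul hx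
    obtain ⟨l, hl1, hl2, hl3⟩ := ih _ hlt τ rfl
    refine ⟨Equiv.swap x (σ x) :: l, ?_, ?_, ?_⟩
    · intro g hg
      rcases List.mem_cons.1 hg with rfl | hg
      · exact ⟨x, σ x, Ne.symm hx, rfl⟩
      · exact hl1 g hg
    · rw [List.prod_cons, hl2, hτ, swap_mul_swap_mul]
    · have := Nc_swap_mul_eq σ hx
      rw [← hτ] at this
      simp only [List.length_cons]
      omega

lemma le_Nc_prod_swaps {p : ℕ} (l : List (Perm (Fin p))) (hl : ∀ g ∈ l, Equiv.Perm.IsSwap g) :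
    p ≤ Nc (scSetoid l.prod) + l.length := by
  induction l with
  | nil => simp [Nc_one]
  | cons t l ih =>
    obtain ⟨a, b, hab, rfl⟩ := hl t (List.mem_cons_self)
    have h1 := ih fun g hg => hl g (List.mem_cons_of_mem _ hg)
    have h2 := Nc_le_Nc_swap_mul_add_one l.prod a b
    rw [List.prod_cons]
    simp only [List.length_cons]
    omega

lemma Nc_inv {p : ℕ} (σ : Perm (Fin p)) : Nc (scSetoid σ⁻¹) = Nc (scSetoid σ) := by
  congr 1
  exact Setoid.ext fun x y => Equiv.Perm.sameCycle_inv

lemma Nc_le {p : ℕ} (σ : Perm (Fin p)) : Nc (scSetoid σ) ≤ p := by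
  have : Function.Surjective (Quotient.mk (scSetoid σ)) := Quotient.exists_rep
  have h := Nat.card_le_card_of_surjective _ this
  rwa [Nat.card_eq_fintype_card (α := Fin p), Fintype.card_fin] at h

/-- For any `π ∈ S_p` and the full cycle `γ`, `|π| + |πγ⁻¹| ≤ p + 1`. -/
theorem cycleCount_add_cycleCount_mul_inv_finRotate_le (p : ℕ) (π : Equiv.Perm (Fin p)) :
    cycleCount π + cycleCount (π * (finRotate p)⁻¹) ≤ p + 1 := by
  rw [cycleCount_eq_Nc, cycleCount_eq_Nc]
  rcases lt_or_ge p 2 with hp | hp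
  · have h1 := Nc_le π
    have h2 := Nc_le (π * (finRotate p)⁻¹)
    omega
  · set γ := finRotate p with hγ
    set ρ := γ * π⁻¹ with hρ
    have hinv : π * γ⁻¹ = ρ⁻¹ := by rw [hρ]; group
    have hγρ : γ = ρ * π := by rw [hρ]; group
    obtain ⟨l1, hl11, hl12, hl13⟩ := exists_swap_decomp ρ
    obtain ⟨l2, hl21, hl22, hl23⟩ := exists_swap_decomp π
    have hprod : (l1 ++ l2).prod = γ := by rw [List.prod_append, hl12, hl22, hγρ]
    have hbound := le_Nc_prod_swaps (l1 ++ l2) (by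
      intro g hg
      rcases List.mem_append.1 hg with hg | hg
      exacts [hl11 g hg, hl21 g hg])
    rw [hprod, List.length_append] at hbound
    have hγ1 : Nc (scSetoid γ) = 1 := by
      rw [← cycleCount_eq_Nc, cycleCount, hγ, cycleType_finRotate_of_le hp]
      have hfix : (Finset.univ.filter fun x => finRotate p x = x) = ∅ := by
        rw [Finset.filter_eq_empty_iff]
        intro x _
        have := support_finRotate_of_le hp
        have hx : x ∈ (finRotate p).support := this ▸ Finset.mem_univ x
        exact Equiv.Perm.mem_support.1 hx
      rw [hfix]
      simp
    rw [hinv, Nc_inv]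
    omega
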